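/- Let C*_N = 2 Γ²(N/4) / Γ²((N-2)/4) be the best constant of Kato's inequality in the half-space ℝ^N_+. Then lim_{N→∞} C*_N / N = 1/2, and also lim_{N→∞} j_{(N-3)/2,1} / N = 1/2, so that j_{(N-3)/2,1} ∼ C*_N as N → ∞. -/

import Mathlib

open Real Filter

noncomputable def besselJ (μ z : ℝ) : ℝ :=
  ∑' k : ℕ, ((-1 : ℝ) ^ k / ((k.factorial : ℝ) * Real.Gamma ((k : ℝ) + μ + 1))) *
    (z / 2) ^ (2 * (k : ℝ) + μ)

def IsFirstPosZero (f : ℝ → ℝ) (j : ℝ) : Prop :=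
  0 < j ∧ f j = 0 ∧ ∀ z, 0 < z → z < j → f z ≠ 0

/-- Best constant of Kato's inequality in the half-space `ℝ^N_+`. -/
noncomputable def katoConst (N : ℕ) : ℝ :=
  2 * Real.Gamma ((N : ℝ) / 4) ^ 2 / Real.Gamma (((N : ℝ) - 2) / 4) ^ 2


open Set

noncomputable def aa (μ : ℝ) (k : ℕ) : ℝ :=
  (-1 : ℝ) ^ k / ((k.factorial : ℝ) * Real.Gamma ((k : ℝ) + μ + 1))

noncomputable def gg (μ x : ℝ) : ℝ := ∑' k : ℕ, aa μ k * x ^ k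
noncomputable def gg1 (μ x : ℝ) : ℝ := ∑' k : ℕ, ((k : ℝ) + 1) * aa μ (k+1) * x ^ k
noncomputable def gg2 (μ x : ℝ) : ℝ :=
  ∑' k : ℕ, ((k : ℝ) + 2) * ((k : ℝ) + 1) * aa μ (k+2) * x ^ k

section mu
variable {μ : ℝ} (hμ : 1 ≤ μ)
include hμ

lemma Gamma_arg_pos (k : ℕ) : (0:ℝ) < (k : ℝ) + μ + 1 := by
  have : (0:ℝ) ≤ (k:ℝ) := Nat.cast_nonneg k
  linarith

lemma Gamma_aa_pos (k : ℕ) : 0 < Real.Gamma ((k : ℝ) + μ + 1) :=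
  Real.Gamma_pos_of_pos (Gamma_arg_pos hμ k)

lemma Gamma_ge : ∀ k : ℕ, 2 ^ k * Real.Gamma (μ + 1) ≤ Real.Gamma ((k : ℝ) + μ + 1) := by
  intro k
  induction k with
  | zero => simp
  | succ n ih =>
    have h1 : ((n+1 : ℕ) : ℝ) + μ + 1 = ((n:ℝ) + μ + 1) + 1 := by push_cast; ring
    rw [h1, Real.Gamma_add_one (ne_of_gt (Gamma_arg_pos hμ n))]
    have h2 : (2:ℝ) ≤ (n:ℝ) + μ + 1 := by
      have : (0:ℝ) ≤ (n:ℝ) := Nat.cast_nonneg n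
      linarith
    have h3 : 0 < Real.Gamma ((n:ℝ) + μ + 1) := Gamma_aa_pos hμ n
    calc (2:ℝ) ^ (n+1) * Real.Gamma (μ + 1) = 2 * (2 ^ n * Real.Gamma (μ+1)) := by ring
    _ ≤ 2 * Real.Gamma ((n:ℝ) + μ + 1) := by
        have := Real.Gamma_pos_of_pos (show (0:ℝ) < μ + 1 by linarith)
        nlinarith
    _ ≤ ((n:ℝ) + μ + 1) * Real.Gamma ((n:ℝ) + μ + 1) := by nlinarith

lemma abs_aa_le (k : ℕ) :
    |aa μ k| ≤ (Real.Gamma (μ+1))⁻¹ * (1/2) ^ k / (k.factorial : ℝ) := by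
  have hG := Gamma_aa_pos hμ k
  have hf : (0:ℝ) < (k.factorial : ℝ) := by exact_mod_cast k.factorial_pos
  have hGμ : 0 < Real.Gamma (μ+1) := Real.Gamma_pos_of_pos (by linarith)
  have h1 : |aa μ k| = 1 / ((k.factorial : ℝ) * Real.Gamma ((k:ℝ) + μ + 1)) := by
    rw [aa, abs_div, abs_pow, abs_neg, abs_one, one_pow, abs_of_pos (by positivity)]
  rw [h1, div_le_div_iff₀ (by positivity) (by positivity)]
  have h2 := Gamma_ge hμ k
  have h3 : ((1:ℝ)/2)^k = ((2:ℝ)^k)⁻¹ := by rw [one_div, inv_pow]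
  have key : (Real.Gamma (μ+1))⁻¹ * (1/2)^k * ((k.factorial:ℝ) * (2^k * Real.Gamma (μ+1)))
      = (k.factorial:ℝ) := by
    rw [h3]; field_simp
  have hnn : (0:ℝ) ≤ (Real.Gamma (μ+1))⁻¹ * (1/2)^k * (k.factorial:ℝ) := by positivity
  nlinarith [mul_le_mul_of_nonneg_left h2 hnn]

end mu

lemma six_le (k : ℕ) : ((k:ℝ)+2)*((k:ℝ)+1) ≤ 6 * 2 ^ k := by
  induction k with
  | zero => norm_num
  | succ n ih =>
    have h : (0:ℝ) ≤ (n:ℝ) := Nat.cast_nonneg n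
    push_cast
    rw [pow_succ]
    have hp : n + 1 ≤ 2^n := Nat.succ_le_of_lt Nat.lt_two_pow_self
    have hp' : (n:ℝ) + 1 ≤ 2^n := by exact_mod_cast hp
    nlinarith

lemma summable_master (R : ℝ) :
    Summable (fun k : ℕ => ((k:ℝ)+2)*((k:ℝ)+1) * R ^ k / (k.factorial : ℝ)) := by
  apply Summable.of_norm
  have h6 : Summable (fun k : ℕ => 6 * ((2*|R|) ^ k / (k.factorial : ℝ))) :=
    (Real.summable_pow_div_factorial (2*|R|)).mul_left 6
  apply Summable.of_nonneg_of_le (fun k => norm_nonneg _) _ h6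
  intro k
  have hf : (0:ℝ) < (k.factorial : ℝ) := by exact_mod_cast k.factorial_pos
  have h1 : ‖((k:ℝ)+2)*((k:ℝ)+1) * R ^ k / (k.factorial : ℝ)‖
      = ((k:ℝ)+2)*((k:ℝ)+1) * |R| ^ k / (k.factorial : ℝ) := by
    rw [norm_eq_abs, abs_div, abs_mul, abs_mul, abs_pow]
    have h2 : |((k:ℝ)+2)| = (k:ℝ)+2 := abs_of_pos (by positivity)
    have h3 : |((k:ℝ)+1)| = (k:ℝ)+1 := abs_of_pos (by positivity)
    rw [h2, h3, abs_of_pos hf]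
  rw [h1]
  calc ((k:ℝ)+2)*((k:ℝ)+1) * |R| ^ k / (k.factorial : ℝ)
      ≤ 6 * 2^k * |R| ^ k / (k.factorial : ℝ) := by
        have h2 : (0:ℝ) ≤ |R|^k := by positivity
        have := six_le k
        gcongr
    _ = 6 * ((2*|R|) ^ k / (k.factorial : ℝ)) := by rw [mul_pow]; ring

lemma summable_of_coeff_le {B : ℝ} {c : ℕ → ℝ}
    (h : ∀ k, |c k| ≤ B * (1/2) ^ k / (k.factorial : ℝ)) (x : ℝ) :
    Summable (fun k : ℕ => c k * x ^ k) := by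
  have hB : 0 ≤ B := le_trans (abs_nonneg _) (by simpa using h 0)
  apply Summable.of_norm
  apply Summable.of_nonneg_of_le (fun k => norm_nonneg _) _
    (((summable_master (|x|/2)).mul_left B))
  intro k
  have hf : (0:ℝ) < (k.factorial : ℝ) := by exact_mod_cast k.factorial_pos
  have h1 : ‖c k * x ^ k‖ = |c k| * |x| ^ k := by rw [norm_eq_abs, abs_mul, abs_pow]
  have h2 : ((1:ℝ)/2) ^ k * |x| ^ k = (|x|/2) ^ k := by rw [← mul_pow]; ring_nf
  have hk0 : (0:ℝ) ≤ (k:ℝ) := Nat.cast_nonneg k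
  rw [h1]
  calc |c k| * |x| ^ k ≤ (B * (1/2) ^ k / (k.factorial : ℝ)) * |x| ^ k :=
        mul_le_mul_of_nonneg_right (h k) (by positivity)
    _ = B * ((|x|/2) ^ k / (k.factorial : ℝ)) := by rw [← h2]; ring
    _ ≤ B * (((k:ℝ)+2)*((k:ℝ)+1) * (|x|/2) ^ k / (k.factorial : ℝ)) := by
        apply mul_le_mul_of_nonneg_left _ hB
        gcongr
        nlinarith [pow_nonneg (show (0:ℝ) ≤ |x|/2 by positivity) k, hk0,
          mul_nonneg (mul_nonneg hk0 hk0) (pow_nonneg (show (0:ℝ) ≤ |x|/2 by positivity) k),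
          mul_nonneg hk0 (pow_nonneg (show (0:ℝ) ≤ |x|/2 by positivity) k)]

lemma hasDerivAt_series {B : ℝ} {c : ℕ → ℝ}
    (h : ∀ k, |c k| ≤ B * (1/2) ^ k / (k.factorial : ℝ)) (x : ℝ) :
    HasDerivAt (fun y => ∑' k : ℕ, c k * y ^ k)
      (∑' k : ℕ, ((k:ℝ)+1) * c (k+1) * x ^ k) x := by
  have hB : 0 ≤ B := le_trans (abs_nonneg _) (by simpa using h 0)
  set R : ℝ := |x| + 1 with hR
  have hR1 : (1:ℝ) ≤ R := le_add_of_nonneg_left (abs_nonneg x)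
  have hx : x ∈ Ioo (-R) R := by
    constructor
    · nlinarith [neg_abs_le x]
    · nlinarith [le_abs_self x]
  have key : ∀ (k : ℕ) (y : ℝ), y ∈ Ioo (-R) R →
      ‖c k * ((k:ℝ) * y ^ (k-1))‖ ≤ B * (((k:ℝ)+2)*((k:ℝ)+1) * (R/2) ^ k / (k.factorial : ℝ)) := by
    intro k y hy
    have hf : (0:ℝ) < (k.factorial : ℝ) := by exact_mod_cast k.factorial_pos
    have hyR : |y| ≤ R := by
      rw [abs_le]; exact ⟨le_of_lt hy.1, le_of_lt hy.2⟩
    have hk0 : (0:ℝ) ≤ (k:ℝ) := Nat.cast_nonneg k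
    have h1 : ‖c k * ((k:ℝ) * y ^ (k-1))‖ = |c k| * ((k:ℝ) * |y| ^ (k-1)) := by
      rw [norm_eq_abs, abs_mul, abs_mul, abs_pow, Nat.abs_cast]
    have h2 : |y| ^ (k-1) ≤ R ^ (k-1) := pow_le_pow_left₀ (abs_nonneg y) hyR _
    have h3 : R ^ (k-1) ≤ R ^ k := pow_le_pow_right₀ hR1 (Nat.sub_le k 1)
    have h4 : (k:ℝ) * |y| ^ (k-1) ≤ (((k:ℝ)+2)*((k:ℝ)+1)) * R ^ k := by
      have : (k:ℝ) * |y| ^ (k-1) ≤ (k:ℝ) * R ^ k :=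
        mul_le_mul_of_nonneg_left (le_trans h2 h3) hk0
      have hRk : (0:ℝ) ≤ R ^ k := by positivity
      nlinarith [mul_nonneg hk0 hRk, mul_nonneg (mul_nonneg hk0 hk0) hRk]
    rw [h1]
    calc |c k| * ((k:ℝ) * |y| ^ (k-1))
        ≤ (B * (1/2) ^ k / (k.factorial : ℝ)) * ((((k:ℝ)+2)*((k:ℝ)+1)) * R ^ k) := by
          apply mul_le_mul (h k) h4 (by positivity) (by positivity)
      _ = B * (((k:ℝ)+2)*((k:ℝ)+1) * (R/2) ^ k / (k.factorial : ℝ)) := by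
          rw [div_pow]
          field_simp
          rw [mul_assoc B (2 ^ k), ← mul_pow]; ring
  have main := hasDerivAt_tsum_of_isPreconnected
    (u := fun k : ℕ => B * (((k:ℝ)+2)*((k:ℝ)+1) * (R/2) ^ k / (k.factorial : ℝ)))
    ((summable_master (R/2)).mul_left B) isOpen_Ioo (convex_Ioo (-R) R).isPreconnected
    (g := fun (k : ℕ) (y : ℝ) => c k * y ^ k) (g' := fun (k : ℕ) (y : ℝ) => c k * ((k:ℝ) * y ^ (k-1)))
    (fun k y _ => by simpa using (hasDerivAt_pow k y).const_mul (c k))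
    key hx (summable_of_coeff_le h x) hx
  have hs : Summable (fun k : ℕ => c k * ((k:ℝ) * x ^ (k-1))) := by
    apply Summable.of_norm
    apply Summable.of_nonneg_of_le (fun k => norm_nonneg _)
      (fun k => key k x hx) (((summable_master (R/2)).mul_left B))
  have e : (∑' k : ℕ, c k * ((k:ℝ) * x ^ (k-1)))
      = ∑' k : ℕ, ((k:ℝ)+1) * c (k+1) * x ^ k := by
    rw [Summable.tsum_eq_zero_add hs]
    simp only [Nat.cast_zero, zero_mul, mul_zero, zero_add, Nat.add_sub_cancel]
    exact tsum_congr fun k => by push_cast; ring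
  exact e ▸ main

section mu2
variable {μ : ℝ} (hμ : 1 ≤ μ)
include hμ

lemma coeff1_le (k : ℕ) :
    |((k:ℝ)+1) * aa μ (k+1)| ≤ (Real.Gamma (μ+1))⁻¹ * (1/2) ^ k / (k.factorial : ℝ) := by
  have h := abs_aa_le hμ (k+1)
  have hf : (0:ℝ) < (k.factorial : ℝ) := by exact_mod_cast k.factorial_pos
  have hfs : ((k+1).factorial : ℝ) = ((k:ℝ)+1) * (k.factorial : ℝ) := by
    rw [Nat.factorial_succ]; push_cast; ring
  have hB : (0:ℝ) ≤ (Real.Gamma (μ+1))⁻¹ :=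
    le_of_lt (inv_pos.2 (Real.Gamma_pos_of_pos (by linarith)))
  have hk1 : (0:ℝ) < (k:ℝ)+1 := by positivity
  rw [abs_mul, abs_of_pos hk1]
  calc ((k:ℝ)+1) * |aa μ (k+1)|
      ≤ ((k:ℝ)+1) * ((Real.Gamma (μ+1))⁻¹ * (1/2) ^ (k+1) / (((k+1).factorial : ℝ))) :=
        mul_le_mul_of_nonneg_left h (le_of_lt hk1)
    _ = (Real.Gamma (μ+1))⁻¹ * (1/2) ^ (k+1) / (k.factorial : ℝ) := by
        rw [hfs]; field_simp
    _ ≤ (Real.Gamma (μ+1))⁻¹ * (1/2) ^ k / (k.factorial : ℝ) := by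
        have h12 : ((1:ℝ)/2) ^ (k+1) ≤ (1/2) ^ k :=
          pow_le_pow_of_le_one (by norm_num) (by norm_num) (Nat.le_succ k)
        gcongr

lemma hasDerivAt_gg (x : ℝ) : HasDerivAt (gg μ) (gg1 μ x) x := by
  have := hasDerivAt_series (abs_aa_le hμ) x
  exact this

lemma hasDerivAt_gg1 (x : ℝ) : HasDerivAt (gg1 μ) (gg2 μ x) x := by
  have h : HasDerivAt (fun y : ℝ => ∑' k : ℕ, (((k:ℝ)+1) * aa μ (k+1)) * y ^ k)
      (∑' k : ℕ, ((k:ℝ)+1) * ((((k+1:ℕ):ℝ)+1) * aa μ (k+1+1)) * x ^ k) x :=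
    hasDerivAt_series (c := fun k => ((k:ℝ)+1) * aa μ (k+1)) (coeff1_le hμ) x
  have e : (∑' k : ℕ, ((k:ℝ)+1) * ((((k+1:ℕ):ℝ)+1) * aa μ (k+1+1)) * x ^ k) = gg2 μ x := by
    rw [gg2]
    exact tsum_congr fun k => by push_cast; ring
  exact e ▸ h


lemma coeff2_le (k : ℕ) :
    |(((k:ℝ)+2) * ((k:ℝ)+1)) * aa μ (k+2)| ≤ (Real.Gamma (μ+1))⁻¹ * (1/2) ^ k / (k.factorial : ℝ) := by
  have h := coeff1_le hμ (k+1)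
  have hf : (0:ℝ) < (k.factorial : ℝ) := by exact_mod_cast k.factorial_pos
  have hfs : ((k+1).factorial : ℝ) = ((k:ℝ)+1) * (k.factorial : ℝ) := by
    rw [Nat.factorial_succ]; push_cast; ring
  have hk1 : (0:ℝ) < (k:ℝ)+1 := by positivity
  have h2 : |((k:ℝ)+2) * aa μ (k+2)| ≤ (Real.Gamma (μ+1))⁻¹ * (1/2) ^ (k+1) / ((k+1).factorial : ℝ) := by
    have := coeff1_le hμ (k+1)
    convert this using 3 <;> push_cast <;> ring
  rw [show (((k:ℝ)+2) * ((k:ℝ)+1)) * aa μ (k+2) = ((k:ℝ)+1) * (((k:ℝ)+2) * aa μ (k+2)) from by ring,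
    abs_mul, abs_of_pos hk1]
  calc ((k:ℝ)+1) * |((k:ℝ)+2) * aa μ (k+2)|
      ≤ ((k:ℝ)+1) * ((Real.Gamma (μ+1))⁻¹ * (1/2) ^ (k+1) / (((k+1).factorial : ℝ))) :=
        mul_le_mul_of_nonneg_left h2 (le_of_lt hk1)
    _ = (Real.Gamma (μ+1))⁻¹ * (1/2) ^ (k+1) / (k.factorial : ℝ) := by
        rw [hfs]; field_simp
    _ ≤ (Real.Gamma (μ+1))⁻¹ * (1/2) ^ k / (k.factorial : ℝ) := by
        have h12 : ((1:ℝ)/2) ^ (k+1) ≤ (1/2) ^ k :=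
          pow_le_pow_of_le_one (by norm_num) (by norm_num) (Nat.le_succ k)
        gcongr

lemma aa_recur (k : ℕ) : ((k:ℝ)+1) * ((k:ℝ)+μ+1) * aa μ (k+1) = - aa μ k := by
  have hΓ : Real.Gamma (((k+1:ℕ):ℝ) + μ + 1) = ((k:ℝ)+μ+1) * Real.Gamma ((k:ℝ)+μ+1) := by
    rw [show ((k+1:ℕ):ℝ) + μ + 1 = ((k:ℝ)+μ+1)+1 from by push_cast; ring,
      Real.Gamma_add_one (ne_of_gt (Gamma_arg_pos hμ k))]
  have hG := Gamma_aa_pos hμ k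
  have harg := Gamma_arg_pos hμ k
  have hf : (0:ℝ) < (k.factorial : ℝ) := by exact_mod_cast k.factorial_pos
  have hfs : ((k+1).factorial : ℝ) = ((k:ℝ)+1) * (k.factorial : ℝ) := by
    rw [Nat.factorial_succ]; push_cast; ring
  rw [aa, aa, hΓ, hfs, pow_succ]
  field_simp

lemma gg_ode (x : ℝ) : x * gg2 μ x + (μ+1) * gg1 μ x + gg μ x = 0 := by
  have S0 : Summable (fun k : ℕ => aa μ k * x ^ k) := summable_of_coeff_le (abs_aa_le hμ) x
  have S1 : Summable (fun k : ℕ => (((k:ℝ)+1) * aa μ (k+1)) * x ^ k) :=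
    summable_of_coeff_le (coeff1_le hμ) x
  have S2 : Summable (fun k : ℕ => ((((k:ℝ)+2) * ((k:ℝ)+1)) * aa μ (k+2)) * x ^ k) :=
    summable_of_coeff_le (coeff2_le hμ) x
  set F : ℕ → ℝ := fun k => (k:ℝ) * (((k:ℝ) - 1) + 1) * ((k:ℝ) - 1 + μ + 1) * 0 with hFdummy
  clear hFdummy F
  -- F k := (k+1) * k * aa μ (k+1) * x^k  (the series of x * gg2)
  set G : ℕ → ℝ := fun k => ((k:ℝ)+1) * (k:ℝ) * aa μ (k+1) * x ^ k with hG
  have hGsum : Summable G := by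
    rw [← summable_nat_add_iff 1]
    apply Summable.congr (S2.mul_right x)
    intro k
    rw [hG]; push_cast; ring
  have e1 : x * gg2 μ x = ∑' k, G k := by
    rw [gg2, ← tsum_mul_left, Summable.tsum_eq_zero_add hGsum]
    have hG0 : G 0 = 0 := by rw [hG]; norm_num
    rw [hG0, zero_add]
    exact tsum_congr fun k => by rw [hG]; push_cast; ring
  have e2 : (μ+1) * gg1 μ x = ∑' k : ℕ, (μ+1) * ((((k:ℝ)+1) * aa μ (k+1)) * x ^ k) := by
    rw [gg1, ← tsum_mul_left]
  have e3 : x * gg2 μ x + (μ+1) * gg1 μ x = ∑' k, (-(aa μ k)) * x ^ k := by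
    rw [e1, e2, ← Summable.tsum_add hGsum (S1.mul_left (μ+1))]
    apply tsum_congr
    intro k
    rw [hG, ← aa_recur hμ k]
    ring
  have e4 : (∑' k, (-(aa μ k)) * x ^ k) = - gg μ x := by
    rw [gg, ← tsum_neg]
    exact tsum_congr fun k => by ring
  rw [e3, e4]
  ring

lemma gg_zero_pos : 0 < gg μ 0 := by
  have : gg μ 0 = aa μ 0 := by
    rw [gg]
    rw [tsum_eq_single 0 (fun k hk => by simp [zero_pow hk])]
    simp
  rw [this, aa]
  simp only [pow_zero, Nat.factorial_zero, Nat.cast_one, Nat.cast_zero, one_mul, zero_add]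
  have := Real.Gamma_pos_of_pos (show (0:ℝ) < 0 + μ + 1 by linarith)
  positivity

end mu2

noncomputable def UU (μ z : ℝ) : ℝ := z ^ (μ + 1/2) * gg μ (z^2/4)

noncomputable def VV (μ z : ℝ) : ℝ :=
  ((μ + 1/2) * z ^ (μ + 1/2 - 1)) * gg μ (z^2/4) + z ^ (μ + 1/2) * (gg1 μ (z^2/4) * (z/2))

noncomputable def qq (μ z : ℝ) : ℝ := 1 - (μ^2 - 1/4)/z^2

section mu3
variable {μ : ℝ} (hμ : 1 ≤ μ)
include hμ

lemma hasDerivAt_sq4 (z : ℝ) : HasDerivAt (fun z : ℝ => z^2/4) (z/2) z := by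
  have := (hasDerivAt_pow 2 z).div_const 4
  refine this.congr_deriv ?_
  push_cast
  ring

lemma hasDerivAt_UU {z : ℝ} (hz : 0 < z) : HasDerivAt (UU μ) (VV μ z) z := by
  have h1 : HasDerivAt (fun z : ℝ => z ^ (μ + 1/2)) ((μ + 1/2) * z ^ (μ + 1/2 - 1)) z :=
    Real.hasDerivAt_rpow_const (Or.inl hz.ne')
  have h3 : HasDerivAt (fun z : ℝ => gg μ (z^2/4)) (gg1 μ (z^2/4) * (z/2)) z :=
    by have h := (hasDerivAt_gg hμ (z^2/4)).comp z (hasDerivAt_sq4 hμ z); exact h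
  exact h1.mul h3

lemma hasDerivAt_VV {z : ℝ} (hz : 0 < z) : HasDerivAt (VV μ) (-(qq μ z) * UU μ z) z := by
  have h1 : HasDerivAt (fun z : ℝ => z ^ (μ + 1/2)) ((μ + 1/2) * z ^ (μ + 1/2 - 1)) z :=
    Real.hasDerivAt_rpow_const (Or.inl hz.ne')
  have h1' : HasDerivAt (fun z : ℝ => z ^ (μ + 1/2 - 1)) ((μ + 1/2 - 1) * z ^ (μ + 1/2 - 1 - 1)) z :=
    Real.hasDerivAt_rpow_const (Or.inl hz.ne')
  have h3 : HasDerivAt (fun z : ℝ => gg μ (z^2/4)) (gg1 μ (z^2/4) * (z/2)) z :=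
    by have h := (hasDerivAt_gg hμ (z^2/4)).comp z (hasDerivAt_sq4 hμ z); exact h
  have h4 : HasDerivAt (fun z : ℝ => gg1 μ (z^2/4)) (gg2 μ (z^2/4) * (z/2)) z :=
    by have h := (hasDerivAt_gg1 hμ (z^2/4)).comp z (hasDerivAt_sq4 hμ z); exact h
  have h5 : HasDerivAt (fun z : ℝ => z/2) (1/2) z := (hasDerivAt_id z).div_const 2
  have hT1 : HasDerivAt (fun z : ℝ => ((μ + 1/2) * z ^ (μ + 1/2 - 1)) * gg μ (z^2/4))
      (((μ + 1/2) * ((μ + 1/2 - 1) * z ^ (μ + 1/2 - 1 - 1))) * gg μ (z^2/4)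
        + ((μ + 1/2) * z ^ (μ + 1/2 - 1)) * (gg1 μ (z^2/4) * (z/2))) z :=
    (h1'.const_mul (μ + 1/2)).mul h3
  have hT2 : HasDerivAt (fun z : ℝ => z ^ (μ + 1/2) * (gg1 μ (z^2/4) * (z/2)))
      (((μ + 1/2) * z ^ (μ + 1/2 - 1)) * (gg1 μ (z^2/4) * (z/2))
        + z ^ (μ + 1/2) * ((gg2 μ (z^2/4) * (z/2)) * (z/2) + gg1 μ (z^2/4) * (1/2))) z :=
    h1.mul (h4.mul h5)
  have hsum := hT1.add hT2
  have heq : (((μ + 1/2) * ((μ + 1/2 - 1) * z ^ (μ + 1/2 - 1 - 1))) * gg μ (z^2/4)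
        + ((μ + 1/2) * z ^ (μ + 1/2 - 1)) * (gg1 μ (z^2/4) * (z/2)))
        + (((μ + 1/2) * z ^ (μ + 1/2 - 1)) * (gg1 μ (z^2/4) * (z/2))
        + z ^ (μ + 1/2) * ((gg2 μ (z^2/4) * (z/2)) * (z/2) + gg1 μ (z^2/4) * (1/2)))
      = -(qq μ z) * UU μ z := by
    have hODE := gg_ode hμ (z^2/4)
    set B := z ^ (μ + 1/2 - 1 - 1) with hB
    have eC : z ^ (μ + 1/2 - 1) = B * z := by
      rw [hB, ← Real.rpow_add_one hz.ne']; norm_num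
    have eD : z ^ (μ + 1/2) = B * z * z := by
      rw [hB, ← Real.rpow_add_one hz.ne', ← Real.rpow_add_one hz.ne']; norm_num
    rw [UU, qq, eC, eD]
    set G := gg μ (z^2/4)
    set G1 := gg1 μ (z^2/4)
    set G2 := gg2 μ (z^2/4)
    have hq : (1 - (μ^2 - 1/4)/z^2) * ((B * z * z) * G) = (B * z * z) * G - (μ^2 - 1/4) * (B * G) := by
      field_simp
    rw [neg_mul, hq]
    linear_combination (B * z * z) * hODE
  exact heq ▸ hsum
end mu3

lemma sign_const {f : ℝ → ℝ} {a b : ℝ} (hab : a ≤ b) (hc : ContinuousOn f (Icc a b))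
    (hne : ∀ z ∈ Icc a b, f z ≠ 0) :
    (∀ z ∈ Icc a b, 0 < f z) ∨ (∀ z ∈ Icc a b, f z < 0) := by
  have ha : a ∈ Icc a b := ⟨le_refl a, hab⟩
  rcases (hne a ha).lt_or_gt with hfa | hfa
  · right
    intro z hz
    by_contra hcon
    push_neg at hcon
    have hfz : 0 < f z := lt_of_le_of_ne hcon (Ne.symm (hne z hz))
    have hsub : Icc a z ⊆ Icc a b := Icc_subset_Icc le_rfl hz.2
    have := intermediate_value_Icc hz.1 (hc.mono hsub)
    have h0 : (0:ℝ) ∈ Icc (f a) (f z) := ⟨le_of_lt hfa, le_of_lt hfz⟩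
    obtain ⟨c, hc1, hc2⟩ := this h0
    exact hne c (hsub hc1) hc2
  · left
    intro z hz
    by_contra hcon
    push_neg at hcon
    have hfz : f z < 0 := lt_of_le_of_ne hcon (hne z hz)
    have hsub : Icc a z ⊆ Icc a b := Icc_subset_Icc le_rfl hz.2
    have := intermediate_value_Icc' hz.1 (hc.mono hsub)
    have h0 : (0:ℝ) ∈ Icc (f z) (f a) := ⟨le_of_lt hfz, le_of_lt hfa⟩
    obtain ⟨c, hc1, hc2⟩ := this h0
    exact hne c (hsub hc1) hc2

lemma sturm_box {q u v : ℝ → ℝ} {A m : ℝ} (hm : 0 < m)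
    (hu : ∀ z ∈ Icc A (A + π/m), HasDerivAt u (v z) z)
    (hv : ∀ z ∈ Icc A (A + π/m), HasDerivAt v (-(q z) * u z) z)
    (hq : ∀ z ∈ Icc A (A + π/m), m^2 ≤ q z)
    (hupos : ∀ z ∈ Icc A (A + π/m), 0 < u z) : False := by
  set B := A + π/m with hB
  have hAB : A ≤ B := by
    rw [hB]
    have : 0 < π/m := div_pos Real.pi_pos hm
    linarith
  set W : ℝ → ℝ := fun z => v z * Real.sin (m*(z-A)) - u z * (m * Real.cos (m*(z-A))) with hW
  have hlin : ∀ z : ℝ, HasDerivAt (fun z => m*(z-A)) m z := by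
    intro z
    simpa using ((hasDerivAt_id z).sub_const A).const_mul m
  have hWd : ∀ z ∈ Icc A B, HasDerivAt W ((m^2 - q z) * (u z * Real.sin (m*(z-A)))) z := by
    intro z hz
    have hsin : HasDerivAt (fun z => Real.sin (m*(z-A))) (Real.cos (m*(z-A)) * m) z :=
      by have h := (Real.hasDerivAt_sin (m*(z-A))).comp z (hlin z); exact h
    have hcos : HasDerivAt (fun z => Real.cos (m*(z-A))) (-Real.sin (m*(z-A)) * m) z :=
      by have h := (Real.hasDerivAt_cos (m*(z-A))).comp z (hlin z); exact h
    have h1 := ((hv z hz).mul hsin).sub ((hu z hz).mul (hcos.const_mul m))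
    refine h1.congr_deriv ?_
    ring
  have hsin_nonneg : ∀ z ∈ Icc A B, 0 ≤ Real.sin (m*(z-A)) := by
    intro z hz
    apply Real.sin_nonneg_of_nonneg_of_le_pi
    · have := hz.1; nlinarith
    · have := hz.2
      rw [hB] at this
      calc m*(z-A) ≤ m*(π/m) := by nlinarith
        _ = π := by field_simp
  have hanti : AntitoneOn W (Icc A B) := by
    apply antitoneOn_of_deriv_nonpos (convex_Icc A B)
    · exact fun z hz => ((hWd z hz).continuousAt).continuousWithinAt
    · intro z hz
      rw [interior_Icc] at hz
      exact ((hWd z (Ioo_subset_Icc_self hz)).differentiableAt).differentiableWithinAt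
    · intro z hz
      rw [interior_Icc] at hz
      have hz' := Ioo_subset_Icc_self hz
      rw [(hWd z hz').deriv]
      have h1 : m^2 - q z ≤ 0 := by linarith [hq z hz']
      have h2 : 0 ≤ u z * Real.sin (m*(z-A)) :=
        mul_nonneg (le_of_lt (hupos z hz')) (hsin_nonneg z hz')
      exact mul_nonpos_of_nonpos_of_nonneg h1 h2
  have hWA : W A = -(u A * m) := by
    rw [hW]
    simp
  have hWB : W B = u B * m := by
    have harg : m * (B - A) = π := by rw [hB]; field_simp; ring
    rw [hW]
    simp only [harg, Real.sin_pi, Real.cos_pi]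
    ring
  have hle := hanti ⟨le_refl A, hAB⟩ ⟨hAB, le_refl B⟩ hAB
  rw [hWA, hWB] at hle
  have h1 : 0 < u A * m := mul_pos (hupos A ⟨le_refl A, hAB⟩) hm
  have h2 : 0 < u B * m := mul_pos (hupos B ⟨hAB, le_refl B⟩) hm
  linarith

section mu4
variable {μ : ℝ} (hμ : 1 ≤ μ)
include hμ

lemma UU_cont_pos {a b : ℝ} (ha : 0 < a) : ContinuousOn (UU μ) (Icc a b) := by
  intro z hz
  exact ((hasDerivAt_UU hμ (lt_of_lt_of_le ha hz.1)).continuousAt).continuousWithinAt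

lemma lower_bound {z₀ : ℝ} (h0 : 0 < z₀) (hzb : z₀^2 ≤ μ^2 - 1/4)
    (hzero : UU μ z₀ = 0) (hne : ∀ z, 0 < z → z < z₀ → UU μ z ≠ 0) : False := by
  have hggc : ContinuousAt (fun z : ℝ => gg μ (z^2/4)) 0 := by
    have h1 : ContinuousAt (gg μ) ((0:ℝ)^2/4) := (hasDerivAt_gg hμ ((0:ℝ)^2/4)).continuousAt
    have h2 : ContinuousAt (fun z : ℝ => z^2/4) 0 := (hasDerivAt_sq4 hμ 0).continuousAt
    exact ContinuousAt.comp (g := gg μ) (f := fun z : ℝ => z^2/4) (x := 0) h1 h2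
  have hg0 : 0 < gg μ ((0:ℝ)^2/4) := by
    rw [show ((0:ℝ)^2/4) = 0 by norm_num]
    exact gg_zero_pos hμ
  have ev : (fun z : ℝ => gg μ (z^2/4)) ⁻¹' (Ioi 0) ∈ nhds (0:ℝ) := hggc (Ioi_mem_nhds hg0)
  obtain ⟨δ, hδpos, hδ⟩ := Metric.mem_nhds_iff.1 ev
  have hposg : ∀ w : ℝ, |w| < δ → 0 < gg μ (w^2/4) := by
    intro w hw
    have : w ∈ Metric.ball (0:ℝ) δ := by simpa [Real.dist_eq] using hw
    exact hδ this
  have hpos : ∀ z, 0 < z → z < z₀ → 0 < UU μ z := by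
    intro z hz hzz
    rcases (hne z hz hzz).lt_or_gt with hneg | hp
    · exfalso
      set w := min (δ/2) z with hw
      have hwpos : 0 < w := lt_min (by linarith) hz
      have hwz : w ≤ z := min_le_right _ _
      have hwδ : |w| < δ := by
        rw [abs_of_pos hwpos]
        calc w ≤ δ/2 := min_le_left _ _
          _ < δ := by linarith
      have hUw : 0 < UU μ w := by
        rw [UU]
        exact mul_pos (Real.rpow_pos_of_pos hwpos _) (hposg w hwδ)
      have hcont : ContinuousOn (UU μ) (Icc w z) := UU_cont_pos hμ hwpos
      obtain ⟨c, hc1, hc2⟩ := intermediate_value_Icc' hwz hcont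
        (⟨le_of_lt hneg, le_of_lt hUw⟩ : (0:ℝ) ∈ Icc (UU μ z) (UU μ w))
      exact hne c (lt_of_lt_of_le hwpos hc1.1) (lt_of_le_of_lt hc1.2 hzz) hc2
    · exact hp
  -- VV μ z₀ ≤ 0
  have hV0 : VV μ z₀ ≤ 0 := by
    have hd := ((hasDerivAt_UU hμ h0).hasDerivWithinAt (s := Iio z₀))
    rw [hasDerivWithinAt_iff_tendsto_slope] at hd
    have hne2 : (z₀ : ℝ) ∉ Iio z₀ := by simp
    rw [diff_singleton_eq_self hne2] at hd
    refine le_of_tendsto hd ?_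
    have hev1 : ∀ᶠ w in nhdsWithin z₀ (Iio z₀), 0 < w :=
      eventually_nhdsWithin_of_eventually_nhds (eventually_gt_nhds h0)
    filter_upwards [self_mem_nhdsWithin, hev1] with w hw hwpos
    have hUw : 0 < UU μ w := hpos w hwpos hw
    rw [slope_def_field]
    apply div_nonpos_of_nonneg_of_nonpos
    · rw [hzero]; simpa using le_of_lt hUw
    · simp only [mem_Iio] at hw; linarith
  -- VV ≤ 0 on (0, z₀]
  have hVle : ∀ w, 0 < w → w ≤ z₀ → VV μ w ≤ 0 := by
    intro w hw hwz
    rcases eq_or_lt_of_le hwz with rfl | hwz'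
    · exact hV0
    · have hmono : MonotoneOn (VV μ) (Icc w z₀) := by
        apply monotoneOn_of_deriv_nonneg (convex_Icc w z₀)
        · intro z hz
          exact ((hasDerivAt_VV hμ (lt_of_lt_of_le hw hz.1)).continuousAt).continuousWithinAt
        · intro z hz
          rw [interior_Icc] at hz
          exact ((hasDerivAt_VV hμ (lt_trans hw hz.1)).differentiableAt).differentiableWithinAt
        · intro z hz
          rw [interior_Icc] at hz
          have hzpos : 0 < z := lt_trans hw hz.1
          rw [(hasDerivAt_VV hμ hzpos).deriv]
          have hUz : 0 < UU μ z := hpos z hzpos hz.2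
          have hqz : qq μ z ≤ 0 := by
            rw [qq]
            have hz2 : z^2 < z₀^2 := by nlinarith [hz.2]
            have : (1:ℝ) ≤ (μ^2 - 1/4)/z^2 := by
              rw [le_div_iff₀ (by positivity)]
              nlinarith
            linarith
          nlinarith
      calc VV μ w ≤ VV μ z₀ := hmono ⟨le_refl w, hwz⟩ ⟨le_of_lt hwz', le_refl z₀⟩ hwz
        _ ≤ 0 := hV0
  -- UU is antitone on (0, z₀)
  have hUanti : ∀ w z, 0 < w → w ≤ z → z < z₀ → UU μ z ≤ UU μ w := by
    intro w z hw hwz hzz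
    have hanti : AntitoneOn (UU μ) (Icc w z) := by
      apply antitoneOn_of_deriv_nonpos (convex_Icc w z)
      · exact UU_cont_pos hμ hw
      · intro ζ hζ
        rw [interior_Icc] at hζ
        exact ((hasDerivAt_UU hμ (lt_trans hw hζ.1)).differentiableAt).differentiableWithinAt
      · intro ζ hζ
        rw [interior_Icc] at hζ
        have hζpos : 0 < ζ := lt_trans hw hζ.1
        rw [(hasDerivAt_UU hμ hζpos).deriv]
        exact hVle ζ hζpos (le_of_lt (lt_trans hζ.2 (lt_of_le_of_lt (le_refl z) hzz)))
    exact hanti ⟨le_refl w, hwz⟩ ⟨hwz, le_refl z⟩ hwz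
  -- UU tends to 0 at 0+
  have hU0 : Tendsto (UU μ) (nhdsWithin 0 (Ioi 0)) (nhds 0) := by
    have hrc : ContinuousAt (fun z : ℝ => z ^ (μ + 1/2)) 0 :=
      Real.continuousAt_rpow_const 0 (μ + 1/2) (Or.inr (by linarith))
    have hUcont : ContinuousAt (UU μ) 0 := hrc.mul hggc
    have hval : UU μ 0 = 0 := by
      rw [UU, Real.zero_rpow (by positivity : μ + 1/2 ≠ 0), zero_mul]
    have := hUcont.tendsto
    rw [hval] at this
    exact this.mono_left nhdsWithin_le_nhds
  -- contradiction
  set z := z₀/2 with hz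
  have hzpos : 0 < z := by rw [hz]; linarith
  have hzlt : z < z₀ := by rw [hz]; linarith
  have hUz : 0 < UU μ z := hpos z hzpos hzlt
  have : UU μ z ≤ 0 := by
    refine ge_of_tendsto hU0 ?_
    have hev1 : ∀ᶠ w in nhdsWithin 0 (Ioi 0), w < z :=
      eventually_nhdsWithin_of_eventually_nhds (eventually_lt_nhds hzpos)
    filter_upwards [self_mem_nhdsWithin, hev1] with w hw hwz
    exact hUanti w z hw (le_of_lt hwz) hzlt
  linarith


lemma upper_bound {A m : ℝ} (hA : 0 < A) (hm : 0 < m)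
    (hq : ∀ z, A ≤ z → m^2 ≤ qq μ z)
    (hne : ∀ z, A ≤ z → z ≤ A + π/m → UU μ z ≠ 0) : False := by
  set B := A + π/m with hB
  have hAB : A ≤ B := by
    have : 0 < π/m := div_pos Real.pi_pos hm
    rw [hB]; linarith
  have hposIcc : ∀ z ∈ Icc A B, 0 < z := fun z hz => lt_of_lt_of_le hA hz.1
  have hcont : ContinuousOn (UU μ) (Icc A B) := UU_cont_pos hμ hA
  have hne' : ∀ z ∈ Icc A B, UU μ z ≠ 0 := fun z hz => hne z hz.1 hz.2
  rcases sign_const hAB hcont hne' with hp | hn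
  · exact sturm_box hm (fun z hz => hasDerivAt_UU hμ (hposIcc z hz))
      (fun z hz => hasDerivAt_VV hμ (hposIcc z hz))
      (fun z hz => hq z hz.1) hp
  · apply sturm_box (q := qq μ) (u := fun z => -UU μ z) (v := fun z => -VV μ z) hm
      (fun z hz => (hasDerivAt_UU hμ (hposIcc z hz)).neg)
      ?_ (fun z hz => hq z hz.1) (fun z hz => by simpa using hn z hz)
    intro z hz
    have h := (hasDerivAt_VV hμ (hposIcc z hz)).neg
    refine h.congr_deriv ?_
    ring

end mu4

lemma besselJ_eq {μ z : ℝ} (hμ : 1 ≤ μ) (hz : 0 < z) :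
    besselJ μ z = (z/2) ^ μ * gg μ (z^2/4) := by
  have hz2 : 0 < z/2 := by linarith
  rw [besselJ, gg, ← tsum_mul_left]
  apply tsum_congr
  intro k
  have h1 : (z/2) ^ (2*(k:ℝ) + μ) = (z/2) ^ (2*(k:ℝ)) * (z/2) ^ μ := by
    rw [← Real.rpow_add hz2]
  have h2 : (z/2 : ℝ) ^ (2*(k:ℝ)) = ((z/2) ^ (2*k : ℕ) : ℝ) := by
    rw [← Real.rpow_natCast (z/2) (2*k)]
    push_cast
    norm_num
  have h3 : ((z/2 : ℝ)) ^ (2*k : ℕ) = (z^2/4) ^ k := by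
    rw [pow_mul]
    congr 1
    ring
  rw [h1, h2, h3, aa]
  ring

lemma besselJ_zero_iff {μ z : ℝ} (hμ : 1 ≤ μ) (hz : 0 < z) :
    besselJ μ z = 0 ↔ UU μ z = 0 := by
  rw [besselJ_eq hμ hz, UU]
  have h1 : (0:ℝ) < (z/2) ^ μ := Real.rpow_pos_of_pos (by linarith) μ
  have h2 : (0:ℝ) < z ^ (μ + 1/2) := Real.rpow_pos_of_pos hz _
  constructor
  · intro h
    rcases mul_eq_zero.1 h with h' | h'
    · exact absurd h' (ne_of_gt h1)
    · rw [h', mul_zero]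
  · intro h
    rcases mul_eq_zero.1 h with h' | h'
    · exact absurd h' (ne_of_gt h2)
    · rw [h', mul_zero]

lemma j_ge {μ : ℝ} (hμ : 1 ≤ μ) {jv : ℝ} (hfz : IsFirstPosZero (besselJ μ) jv) :
    μ - 1 ≤ jv := by
  by_contra hcon
  push_neg at hcon
  have hj2 : jv^2 ≤ μ^2 - 1/4 := by nlinarith [hfz.1]
  exact lower_bound hμ hfz.1 hj2 ((besselJ_zero_iff hμ hfz.1).1 hfz.2.1)
    (fun z hz hzj hUz => hfz.2.2 z hz hzj ((besselJ_zero_iff hμ hz).2 hUz))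

lemma j_le {μ : ℝ} (hμ : 1 ≤ μ) {θ : ℝ} (hθ : 0 < θ) {jv : ℝ}
    (hfz : IsFirstPosZero (besselJ μ) jv) :
    jv ≤ (1+θ)*μ + π / Real.sqrt (1 - 1/(1+θ)^2) := by
  set m := Real.sqrt (1 - 1/(1+θ)^2) with hm
  have h1 : 0 < 1 - 1/(1+θ)^2 := by
    have h2 : (1:ℝ) < (1+θ)^2 := by nlinarith
    have h3 : 1/(1+θ)^2 < 1 := by rw [div_lt_one (by positivity)]; exact h2
    linarith
  have hmpos : 0 < m := Real.sqrt_pos.2 h1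
  have hm2 : m^2 = 1 - 1/(1+θ)^2 := Real.sq_sqrt (le_of_lt h1)
  set A := (1+θ)*μ with hA
  have hApos : 0 < A := by
    rw [hA]; nlinarith
  by_contra hcon
  push_neg at hcon
  apply upper_bound hμ hApos hmpos
  · intro z hz
    have hzpos : 0 < z := lt_of_lt_of_le hApos hz
    rw [qq, hm2]
    have key : (μ^2 - 1/4)/z^2 ≤ 1/(1+θ)^2 := by
      rw [div_le_div_iff₀ (by positivity) (by positivity)]
      have hz2 : A^2 ≤ z^2 := by nlinarith
      rw [hA] at hz2
      nlinarith [sq_nonneg (1+θ)]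
    linarith
  · intro z hz1 hz2
    have hzpos : 0 < z := lt_of_lt_of_le hApos hz1
    have hzj : z < jv := lt_of_le_of_lt hz2 hcon
    exact fun hUz => hfz.2.2 z hzpos hzj ((besselJ_zero_iff hμ hzpos).2 hUz)


lemma Gamma_midpoint_sq_le {a b : ℝ} (ha : 0 < a) (hb : 0 < b) :
    Real.Gamma ((a + b) / 2) ^ 2 ≤ Real.Gamma a * Real.Gamma b := by
  have h := Real.convexOn_log_Gamma.2 (mem_Ioi.2 ha) (mem_Ioi.2 hb)
    (by norm_num : (0:ℝ) ≤ 1/2) (by norm_num : (0:ℝ) ≤ 1/2) (by norm_num)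
  simp only [Function.comp, smul_eq_mul] at h
  have hm : (0:ℝ) < (a + b) / 2 := by linarith
  have e1 : (1/2 : ℝ) * a + (1/2 : ℝ) * b = (a + b) / 2 := by ring
  rw [e1] at h
  have h2 : 2 * Real.log (Real.Gamma ((a+b)/2)) ≤
      Real.log (Real.Gamma a) + Real.log (Real.Gamma b) := by linarith
  have := Real.exp_le_exp.2 h2
  rwa [Real.exp_add, Real.exp_log (Real.Gamma_pos_of_pos ha),
    Real.exp_log (Real.Gamma_pos_of_pos hb), two_mul, Real.exp_add,
    Real.exp_log (Real.Gamma_pos_of_pos hm), ← sq] at this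

lemma gamma_ratio_bounds {y : ℝ} (hy : 0 < y) :
    2 * y ^ 2 / (y + 1/2) ≤ 2 * Real.Gamma (y + 1/2) ^ 2 / Real.Gamma y ^ 2 ∧
    2 * Real.Gamma (y + 1/2) ^ 2 / Real.Gamma y ^ 2 ≤ 2 * y := by
  have hG : 0 < Real.Gamma y := Real.Gamma_pos_of_pos hy
  have hGh : 0 < Real.Gamma (y + 1/2) := Real.Gamma_pos_of_pos (by linarith)
  have h1 : Real.Gamma (y + 1/2) ^ 2 ≤ y * Real.Gamma y ^ 2 := by
    have := Gamma_midpoint_sq_le hy (show (0:ℝ) < y + 1 by linarith)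
    rw [show (y + (y+1))/2 = y + 1/2 by ring, Real.Gamma_add_one (ne_of_gt hy)] at this
    nlinarith
  have h2 : y ^ 2 * Real.Gamma y ^ 2 ≤ (y + 1/2) * Real.Gamma (y + 1/2) ^ 2 := by
    have := Gamma_midpoint_sq_le (show (0:ℝ) < y + 1/2 by linarith)
      (show (0:ℝ) < y + 3/2 by linarith)
    rw [show ((y + 1/2) + (y + 3/2))/2 = y + 1 by ring,
      show y + 3/2 = (y + 1/2) + 1 by ring,
      Real.Gamma_add_one (by positivity : y + 1/2 ≠ 0),
      Real.Gamma_add_one (ne_of_gt hy)] at this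
    nlinarith
  constructor
  · rw [div_le_div_iff₀ (by positivity) (by positivity)]
    nlinarith
  · rw [div_le_iff₀ (by positivity)]
    nlinarith

lemma katoConst_tendsto :
    Tendsto (fun N : ℕ => katoConst N / (N : ℝ)) atTop (nhds (1 / 2)) := by
  have h0 : Tendsto (fun N : ℕ => ((N : ℝ))⁻¹) atTop (nhds 0) :=
    tendsto_inv_atTop_zero.comp tendsto_natCast_atTop_atTop
  have hLB : Tendsto (fun N : ℕ => (1 - 2 * ((N:ℝ))⁻¹) ^ 2 / 2) atTop (nhds (1/2)) := by
    have hc : Continuous fun t : ℝ => (1 - 2 * t) ^ 2 / 2 := by continuity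
    have h := (hc.tendsto 0).comp h0
    norm_num at h
    exact h
  have hUB : Tendsto (fun N : ℕ => 1/2 - ((N:ℝ))⁻¹) atTop (nhds (1/2)) := by
    have := tendsto_const_nhds.sub h0 (α := ℕ) (f := fun _ => (1:ℝ)/2)
    simpa using this
  refine tendsto_of_tendsto_of_tendsto_of_le_of_le' hLB hUB ?_ ?_
  · filter_upwards [eventually_ge_atTop 3] with N hN
    have hN3 : (3:ℝ) ≤ (N:ℝ) := by exact_mod_cast hN
    have hNpos : (0:ℝ) < N := by linarith
    set y : ℝ := ((N:ℝ) - 2)/4 with hy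
    have hy0 : 0 < y := by rw [hy]; linarith
    have e1 : ((N:ℝ))/4 = y + 1/2 := by rw [hy]; ring
    have hl := (gamma_ratio_bounds hy0).1
    have e2 : katoConst N = 2 * Real.Gamma (y+1/2)^2 / Real.Gamma y ^2 := by
      rw [katoConst, e1]
    rw [e2]
    have e3 : (1 - 2*((N:ℝ))⁻¹)^2/2 = (2*y^2/(y+1/2))/(N:ℝ) := by
      rw [hy, show ((N:ℝ)-2)/4 + 1/2 = (N:ℝ)/4 from by ring]
      field_simp [hNpos.ne']
      ring
    rw [e3]
    gcongr
  · filter_upwards [eventually_ge_atTop 3] with N hN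
    have hN3 : (3:ℝ) ≤ (N:ℝ) := by exact_mod_cast hN
    have hNpos : (0:ℝ) < N := by linarith
    set y : ℝ := ((N:ℝ) - 2)/4 with hy
    have hy0 : 0 < y := by rw [hy]; linarith
    have e1 : ((N:ℝ))/4 = y + 1/2 := by rw [hy]; ring
    have hu := (gamma_ratio_bounds hy0).2
    have e2 : katoConst N = 2 * Real.Gamma (y+1/2)^2 / Real.Gamma y ^2 := by
      rw [katoConst, e1]
    rw [e2]
    have e3 : (1:ℝ)/2 - ((N:ℝ))⁻¹ = 2*y/(N:ℝ) := by
      rw [hy]; field_simp [hNpos.ne']; ring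
    rw [e3]
    gcongr


lemma j_tendsto (j : ℕ → ℝ)
    (hj : ∀ N : ℕ, 2 ≤ N → IsFirstPosZero (besselJ (((N : ℝ) - 3) / 2)) (j N)) :
    Tendsto (fun N : ℕ => j N / (N : ℝ)) atTop (nhds (1 / 2)) := by
  have h0 : Tendsto (fun N : ℕ => ((N : ℝ))⁻¹) atTop (nhds 0) :=
    tendsto_inv_atTop_zero.comp tendsto_natCast_atTop_atTop
  refine tendsto_order.2 ⟨?_, ?_⟩
  · intro a ha
    have hlow : Tendsto (fun N : ℕ => 1/2 + (-5/2) * ((N:ℝ))⁻¹) atTop (nhds (1/2)) := by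
      have := (h0.const_mul ((-5:ℝ)/2)).const_add (1/2)
      simpa using this
    have hev := hlow.eventually (eventually_gt_nhds ha)
    filter_upwards [hev, eventually_ge_atTop 5] with N h1 h2
    have hN5 : (5:ℝ) ≤ (N:ℝ) := by exact_mod_cast h2
    have hNpos : (0:ℝ) < (N:ℝ) := by linarith
    have hμ : (1:ℝ) ≤ ((N:ℝ)-3)/2 := by linarith
    have hjge := j_ge hμ (hj N (by omega))
    calc a < 1/2 + (-5/2) * ((N:ℝ))⁻¹ := h1
      _ = (((N:ℝ)-3)/2 - 1)/(N:ℝ) := by field_simp; ring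
      _ ≤ j N / (N:ℝ) := by gcongr
  · intro a ha
    set θ : ℝ := a - 1/2 with hθ
    have hθpos : 0 < θ := by rw [hθ]; linarith
    set C : ℝ := π / Real.sqrt (1 - 1/(1+θ)^2) with hC
    have hup : Tendsto (fun N : ℕ => (1+θ)/2 + (C - 3*(1+θ)/2) * ((N:ℝ))⁻¹)
        atTop (nhds ((1+θ)/2)) := by
      have := (h0.const_mul (C - 3*(1+θ)/2)).const_add ((1+θ)/2)
      simpa using this
    have hlt : (1+θ)/2 < a := by rw [hθ]; linarith
    have hev := hup.eventually (eventually_lt_nhds hlt)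
    filter_upwards [hev, eventually_ge_atTop 5] with N h1 h2
    have hN5 : (5:ℝ) ≤ (N:ℝ) := by exact_mod_cast h2
    have hNpos : (0:ℝ) < (N:ℝ) := by linarith
    have hμ : (1:ℝ) ≤ ((N:ℝ)-3)/2 := by linarith
    have hjle := j_le hμ hθpos (hj N (by omega))
    calc j N / (N:ℝ) ≤ ((1+θ)*(((N:ℝ)-3)/2) + C)/(N:ℝ) := by gcongr
      _ = (1+θ)/2 + (C - 3*(1+θ)/2) * ((N:ℝ))⁻¹ := by field_simp; ring
      _ < a := h1

/-- `C*_N / N → 1/2`, `j_{(N-3)/2,1} / N → 1/2`, hence `j_{(N-3)/2,1} ∼ C*_N`. -/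
theorem katoConst_asymp (j : ℕ → ℝ)
    (hj : ∀ N : ℕ, 2 ≤ N → IsFirstPosZero (besselJ (((N : ℝ) - 3) / 2)) (j N)) :
    Tendsto (fun N : ℕ => katoConst N / (N : ℝ)) atTop (nhds (1 / 2)) ∧
    Tendsto (fun N : ℕ => j N / (N : ℝ)) atTop (nhds (1 / 2)) ∧
    Tendsto (fun N : ℕ => katoConst N / j N) atTop (nhds 1) := by
  have h1 := katoConst_tendsto
  have h2 := j_tendsto j hj
  refine ⟨h1, h2, ?_⟩
  have h3 := h1.div h2 (by norm_num : (1/2 : ℝ) ≠ 0)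
  have h4 : ((1:ℝ)/2) / (1/2) = 1 := by norm_num
  rw [h4] at h3
  apply Tendsto.congr' _ h3
  filter_upwards [eventually_ge_atTop 2] with N hN
  have hNpos : (0:ℝ) < (N:ℝ) := by
    have : (2:ℝ) ≤ (N:ℝ) := by exact_mod_cast hN
    linarith
  simp only [Pi.div_apply]
  rw [div_div_div_comm, div_self hNpos.ne', div_one]
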